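/- Let 0 < μ ≤ 1, ζ > 0, ϑ ≥ μζ, 0 < θ ≤ 1, λ > 0. Let (Ω, F, ℙ) be a probability space carrying i.i.d. real random variables X₁, X₂, … , set R_m = X₁·X₂⋯X_m and F_m = ℙ[R_m ≤ y] for a fixed y ∈ ℝ, and let H : Ω → [0,∞) be a random variable with 𝔼[E_{μ,ϑ}^{ζ}(2λ H^θ)] < ∞. Define for u ≥ 0 the cdf of the multiplicative compound FCP W(y,u) = 𝟙_{y ≥ 1} · Γ(ϑ) E_{μ,ϑ}^{ζ}(−λ u^θ) + ∑_{m=1}^∞ P(m,u) F_m. Then 𝔼[W(y,H)] = 𝟙_{y ≥ 1} Γ(ϑ) ∑_{k=0}^∞ ( (ζ)_k (−λ)^k / (k! Γ(μk+ϑ)) ) 𝔼[H^{θk}] + Γ(ϑ) ∑_{m=1}^∞ ( λ^m (ζ)_m / m! ) F_m ∑_{l=0}^∞ ( (ζ+m)_l (−λ)^l / (l! Γ(μ(l+m)+ϑ)) ) 𝔼[H^{θ(l+m)}], with all series converging absolutely. -/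

import Mathlib

open Real MeasureTheory ProbabilityTheory

/-- Rising factorial (Pochhammer symbol) `(ζ)_n = Γ(ζ+n)/Γ(ζ)`. -/
noncomputable def risingFactorial (ζ : ℝ) (n : ℕ) : ℝ :=
  Real.Gamma (ζ + n) / Real.Gamma ζ

/-- Three-parameter (Prabhakar) Mittag-Leffler function. -/
noncomputable def mittagLeffler (μ ϑ ζ z : ℝ) : ℝ :=
  ∑' m : ℕ, risingFactorial ζ m * z ^ m / (m.factorial * Real.Gamma (μ * m + ϑ))

/-- Probability function of the fractional counting process. -/
noncomputable def fcpP (μ ϑ ζ θ lam : ℝ) (n : ℕ) (t : ℝ) : ℝ :=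
  risingFactorial ζ n * Real.Gamma ϑ * (lam * t ^ θ) ^ n / n.factorial *
    ∑' k : ℕ, risingFactorial (ζ + n) k * (-(lam * t ^ θ)) ^ k /
      (k.factorial * Real.Gamma (μ * (n + k : ℕ) + ϑ))

open scoped ENNReal NNReal

namespace MCFCP

lemma rf_pos {ζ : ℝ} (hζ : 0 < ζ) (n : ℕ) : 0 < risingFactorial ζ n :=
  div_pos (Real.Gamma_pos_of_pos (by positivity)) (Real.Gamma_pos_of_pos hζ)

lemma rf_succ {ζ : ℝ} (hζ : 0 < ζ) (n : ℕ) :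
    risingFactorial ζ (n + 1) = (ζ + n) * risingFactorial ζ n := by
  unfold risingFactorial
  have h : (ζ + ((n:ℕ) + 1 : ℕ) : ℝ) = (ζ + n) + 1 := by push_cast; ring
  rw [h, Real.Gamma_add_one (by positivity), mul_div_assoc]

lemma rf_add {ζ : ℝ} (hζ : 0 < ζ) (n k : ℕ) :
    risingFactorial ζ (n + k) = risingFactorial ζ n * risingFactorial (ζ + n) k := by
  unfold risingFactorial
  have h1 : Real.Gamma ζ ≠ 0 := (Real.Gamma_pos_of_pos hζ).ne'
  have h2 : Real.Gamma (ζ + n) ≠ 0 := (Real.Gamma_pos_of_pos (by positivity)).ne'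
  have h3 : (ζ + (n + k : ℕ) : ℝ) = (ζ + n) + k := by push_cast; ring
  rw [h3]
  field_simp

lemma rf_le {ζ : ℝ} (hζ : 0 < ζ) (n : ℕ) :
    risingFactorial ζ n ≤ (ζ + 1) ^ n * n.factorial := by
  induction n with
  | zero =>
      simp [risingFactorial, div_self (Real.Gamma_pos_of_pos hζ).ne']
  | succ n ih =>
      rw [rf_succ hζ n]
      have hn : (0:ℝ) ≤ (n:ℝ) := Nat.cast_nonneg n
      have h1 : (ζ + n : ℝ) ≤ (ζ + 1) * (n + 1) := by nlinarith
      have h2 : (0:ℝ) ≤ risingFactorial ζ n := (rf_pos hζ n).le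
      calc (ζ + n) * risingFactorial ζ n ≤ ((ζ + 1) * (n + 1)) * ((ζ + 1) ^ n * n.factorial) := by
            apply mul_le_mul h1 ih h2 (by positivity)
        _ = (ζ + 1) ^ (n + 1) * (n + 1).factorial := by
            rw [pow_succ, Nat.factorial_succ]; push_cast; ring

lemma Gamma_mono {x y : ℝ} (hx : 2 ≤ x) (hxy : x ≤ y) : Real.Gamma x ≤ Real.Gamma y :=
  Real.Gamma_strictMonoOn_Ici.monotoneOn (Set.mem_Ici.mpr hx) (Set.mem_Ici.mpr (hx.trans hxy)) hxy

lemma factorial_le_Gamma {x : ℝ} (hx : 2 ≤ x) :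
    ((⌊x⌋₊ - 1).factorial : ℝ) ≤ Real.Gamma x := by
  have h2 : 2 ≤ ⌊x⌋₊ := Nat.le_floor (by exact_mod_cast hx)
  have hfl : (⌊x⌋₊ : ℝ) ≤ x := Nat.floor_le (by linarith)
  have hfl2 : (2 : ℝ) ≤ (⌊x⌋₊ : ℝ) := by exact_mod_cast h2
  have hsucc : (⌊x⌋₊ - 1) + 1 = ⌊x⌋₊ := by omega
  have hΓ : Real.Gamma (⌊x⌋₊ : ℝ) = ((⌊x⌋₊ - 1).factorial : ℝ) := by
    have := Real.Gamma_nat_eq_factorial (⌊x⌋₊ - 1)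
    rw [← this]
    congr 1
    rw [← hsucc]
    push_cast
    ring
  calc ((⌊x⌋₊ - 1).factorial : ℝ) = Real.Gamma (⌊x⌋₊ : ℝ) := hΓ.symm
    _ ≤ Real.Gamma x := Gamma_mono hfl2 hfl


lemma summable_ML {μ ϑ ζ : ℝ} (hμ : 0 < μ) (hϑ : 0 < ϑ) (hζ : 0 < ζ) {z : ℝ} (hz : 0 ≤ z) :
    Summable (fun s : ℕ => risingFactorial ζ s * z ^ s / (s.factorial * Real.Gamma (μ * s + ϑ))) := by
  have hΓpos : ∀ s : ℕ, 0 < Real.Gamma (μ * s + ϑ) := fun s =>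
    Real.Gamma_pos_of_pos (by positivity)
  set C : ℝ := (ζ + 1) * z with hCdef
  have hC0 : 0 ≤ C := by positivity
  set B : ℝ := max 1 C with hBdef
  have hB1 : (1:ℝ) ≤ B := le_max_left _ _
  have hCB : C ≤ B := le_max_right _ _
  set q : ℕ := ⌈1 / μ⌉₊ with hqdef
  have hq : 1 / μ ≤ (q : ℝ) := Nat.le_ceil _
  set E : ℝ := B ^ q with hEdef
  have hE1 : (1:ℝ) ≤ E := one_le_pow₀ hB1
  have hE0 : (0:ℝ) < E := lt_of_lt_of_le one_pos hE1
  set C0 : ℝ := ∑' k : ℕ, (2 * E) ^ k / (k.factorial : ℝ) with hC0def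
  have hsum2E : Summable (fun k : ℕ => (2 * E) ^ k / (k.factorial : ℝ)) :=
    Real.summable_pow_div_factorial (2 * E)
  have hC0k : ∀ k : ℕ, (2 * E) ^ k / (k.factorial : ℝ) ≤ C0 := fun k =>
    Summable.le_tsum hsum2E k fun j _ => by positivity
  have hC0pos : (0:ℝ) < C0 := lt_of_lt_of_le (by norm_num) (hC0k 0)
  set r : ℝ := (1 / 2 : ℝ) ^ μ with hrdef
  have hr0 : 0 < r := Real.rpow_pos_of_pos (by norm_num) _
  have hr1 : r < 1 := Real.rpow_lt_one (by norm_num) (by norm_num) hμ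
  set N : ℕ := ⌈2 / μ⌉₊ with hNdef
  have hN : 2 / μ ≤ (N : ℝ) := Nat.le_ceil _
  rw [← summable_nat_add_iff N]
  have key : ∀ n : ℕ,
      risingFactorial ζ (n + N) * z ^ (n + N) /
          ((n + N).factorial * Real.Gamma (μ * ((n + N : ℕ) : ℝ) + ϑ))
        ≤ (E ^ 2 * C0 * 4) * r ^ (n + N) := by
    intro n
    set s : ℕ := n + N with hsdef
    have hsN : (N : ℝ) ≤ (s : ℝ) := by exact_mod_cast Nat.le_add_left N n
    have hs2 : 2 ≤ μ * s + ϑ := by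
      have h1 : 2 / μ ≤ (s : ℝ) := le_trans hN hsN
      rw [div_le_iff₀ hμ] at h1
      nlinarith
    set x : ℝ := μ * s + ϑ with hxdef
    set ks : ℕ := ⌊x⌋₊ - 1 with hksdef
    have hfl2 : 2 ≤ ⌊x⌋₊ := Nat.le_floor (by exact_mod_cast hs2)
    have hΓ : (ks.factorial : ℝ) ≤ Real.Gamma x := factorial_le_Gamma hs2
    have hΓx : (0:ℝ) < Real.Gamma x := hΓpos s
    have hksfl : ((ks : ℝ)) = (⌊x⌋₊ : ℝ) - 1 := by
      rw [hksdef]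
      push_cast [Nat.cast_sub (by omega : 1 ≤ ⌊x⌋₊)]
      ring
    have hkreal : μ * s - 2 ≤ (ks : ℝ) := by
      have h1 : x - 1 < (⌊x⌋₊ : ℝ) := Nat.sub_one_lt_floor x
      rw [hksfl, hxdef] at *
      linarith
    -- step 1
    have hstep1 : risingFactorial ζ s * z ^ s / (s.factorial * Real.Gamma x)
        ≤ C ^ s / Real.Gamma x := by
      rw [div_le_div_iff₀ (by positivity) hΓx]
      have hnum : risingFactorial ζ s * z ^ s ≤ C ^ s * s.factorial := by
        calc risingFactorial ζ s * z ^ s ≤ ((ζ + 1) ^ s * s.factorial) * z ^ s :=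
              mul_le_mul_of_nonneg_right (rf_le hζ s) (pow_nonneg hz s)
          _ = C ^ s * s.factorial := by rw [hCdef, mul_pow]; ring
      calc risingFactorial ζ s * z ^ s * Real.Gamma x
          ≤ (C ^ s * s.factorial) * Real.Gamma x :=
            mul_le_mul_of_nonneg_right hnum hΓx.le
        _ = C ^ s * (s.factorial * Real.Gamma x) := by ring
    -- step 2
    have hstep2 : C ^ s / Real.Gamma x ≤ B ^ s / (ks.factorial : ℝ) :=
      div_le_div₀ (by positivity) (pow_le_pow_left₀ hC0 hCB s) (by positivity) hΓ
    -- step 3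
    have hsle : s ≤ q * (ks + 2) := by
      have h1 : (s : ℝ) ≤ (q : ℝ) * ((ks : ℝ) + 2) := by
        have h2 : μ * s ≤ (ks : ℝ) + 2 := by linarith
        have h3 : (s : ℝ) = (1 / μ) * (μ * s) := by field_simp
        have h4 : (0:ℝ) ≤ (ks : ℝ) + 2 := by positivity
        calc (s:ℝ) = (1 / μ) * (μ * s) := h3
          _ ≤ (1 / μ) * ((ks : ℝ) + 2) := by
              apply mul_le_mul_of_nonneg_left h2 (by positivity)
          _ ≤ (q : ℝ) * ((ks : ℝ) + 2) := mul_le_mul_of_nonneg_right hq h4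
      exact_mod_cast h1
    have hstep3 : B ^ s ≤ E ^ 2 * E ^ ks := by
      calc B ^ s ≤ B ^ (q * (ks + 2)) := pow_le_pow_right₀ hB1 hsle
        _ = E ^ (ks + 2) := by rw [pow_mul]
        _ = E ^ 2 * E ^ ks := by rw [pow_add]; ring
    -- step 4
    have hstep4 : E ^ ks / (ks.factorial : ℝ) ≤ C0 * (1 / 2 : ℝ) ^ ks := by
      have hEk : E ^ ks = (2 * E) ^ ks * (1 / 2 : ℝ) ^ ks := by
        rw [← mul_pow, show (2 * E * (1 / 2) : ℝ) = E by ring]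
      rw [hEk]
      calc (2 * E) ^ ks * (1 / 2 : ℝ) ^ ks / (ks.factorial : ℝ)
          = ((2 * E) ^ ks / (ks.factorial : ℝ)) * (1 / 2 : ℝ) ^ ks := by ring
        _ ≤ C0 * (1 / 2 : ℝ) ^ ks :=
            mul_le_mul_of_nonneg_right (hC0k ks) (by positivity)
    -- step 5
    have hstep5 : ((1 / 2 : ℝ)) ^ ks ≤ 4 * r ^ s := by
      have h1 : ((1 / 2 : ℝ)) ^ ks = (1 / 2 : ℝ) ^ ((ks : ℝ)) := (Real.rpow_natCast _ ks).symm
      have h2 : (1 / 2 : ℝ) ^ ((ks : ℝ)) ≤ (1 / 2 : ℝ) ^ (μ * s - 2) :=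
        Real.rpow_le_rpow_of_exponent_ge (by norm_num) (by norm_num) hkreal
      have h3 : (1 / 2 : ℝ) ^ (μ * s - 2) = (1 / 2 : ℝ) ^ (μ * (s:ℝ)) / (1 / 2 : ℝ) ^ (2:ℝ) :=
        Real.rpow_sub (by norm_num) _ _
      have h4 : (1 / 2 : ℝ) ^ ((2:ℝ)) = 1 / 4 := by
        rw [show ((2:ℝ)) = ((2:ℕ):ℝ) by norm_num, Real.rpow_natCast]
        norm_num
      have h5 : (1 / 2 : ℝ) ^ (μ * (s:ℝ)) = r ^ s := by
        rw [Real.rpow_mul (by norm_num : (0:ℝ) ≤ 1/2), Real.rpow_natCast]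
      rw [h1]
      calc (1 / 2 : ℝ) ^ ((ks : ℝ)) ≤ (1 / 2 : ℝ) ^ (μ * s - 2) := h2
        _ = r ^ s / (1/4) := by rw [h3, h4, h5]
        _ = 4 * r ^ s := by ring
    -- chain
    calc risingFactorial ζ s * z ^ s / (s.factorial * Real.Gamma x)
        ≤ C ^ s / Real.Gamma x := hstep1
      _ ≤ B ^ s / (ks.factorial : ℝ) := hstep2
      _ ≤ (E ^ 2 * E ^ ks) / (ks.factorial : ℝ) := by gcongr
      _ = E ^ 2 * (E ^ ks / (ks.factorial : ℝ)) := by ring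
      _ ≤ E ^ 2 * (C0 * (1 / 2 : ℝ) ^ ks) := by
          apply mul_le_mul_of_nonneg_left hstep4 (by positivity)
      _ ≤ E ^ 2 * (C0 * (4 * r ^ s)) := by
          apply mul_le_mul_of_nonneg_left
            (mul_le_mul_of_nonneg_left hstep5 hC0pos.le) (by positivity)
      _ = (E ^ 2 * C0 * 4) * r ^ s := by ring
  have hgeom : Summable (fun n : ℕ => ((E ^ 2 * C0 * 4) * r ^ N) * r ^ n) :=
    (summable_geometric_of_lt_one hr0.le hr1).mul_left _
  refine Summable.of_nonneg_of_le (fun n => ?_) (fun n => key n) (hgeom.congr (fun n => ?_))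
  · have h1 := (rf_pos hζ (n + N)).le
    have h2 := (hΓpos (n + N)).le
    positivity
  · rw [pow_add]
    ring

lemma sum_antidiag_inv_fact (n : ℕ) :
    ∑ p ∈ Finset.HasAntidiagonal.antidiagonal n, ((p.1.factorial : ℝ) * p.2.factorial)⁻¹
      = 2 ^ n / n.factorial := by
  rw [Finset.Nat.sum_antidiagonal_eq_sum_range_succ_mk]
  have h : ∀ i ∈ Finset.range (n + 1),
      ((i.factorial : ℝ) * (n - i).factorial)⁻¹ = (n.choose i : ℝ) / n.factorial := by
    intro i hi
    have hin : i ≤ n := Nat.lt_succ_iff.mp (Finset.mem_range.mp hi)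
    have h2 : ((n.choose i : ℝ)) * i.factorial * (n - i).factorial = n.factorial := by
      exact_mod_cast congrArg (Nat.cast : ℕ → ℝ) (Nat.choose_mul_factorial_mul_factorial hin)
    have hf1 : ((i.factorial : ℝ)) ≠ 0 := Nat.cast_ne_zero.mpr i.factorial_ne_zero
    have hf2 : (((n - i).factorial : ℝ)) ≠ 0 := Nat.cast_ne_zero.mpr (n - i).factorial_ne_zero
    have hf3 : ((n.factorial : ℝ)) ≠ 0 := Nat.cast_ne_zero.mpr n.factorial_ne_zero
    field_simp
    linarith [h2]
  rw [Finset.sum_congr rfl h, ← Finset.sum_div]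
  congr 1
  exact_mod_cast Nat.sum_range_choose n

lemma array_summable_tsum {μ ϑ ζ lam : ℝ} (hζ : 0 < ζ)
    (hΓpos : ∀ s : ℕ, 0 < Real.Gamma (μ * s + ϑ)) (hlam : 0 ≤ lam)
    {w : ℕ → ℝ} (hw : ∀ s, 0 ≤ w s)
    (hsum : Summable (fun s : ℕ =>
      risingFactorial ζ s * (2 * lam) ^ s / (s.factorial * Real.Gamma (μ * s + ϑ)) * w s)) :
    Summable (fun p : ℕ × ℕ => risingFactorial ζ (p.1 + p.2) * lam ^ (p.1 + p.2) /
        (p.1.factorial * p.2.factorial * Real.Gamma (μ * (p.1 + p.2 : ℕ) + ϑ)) * w (p.1 + p.2)) ∧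
      ∑' p : ℕ × ℕ, risingFactorial ζ (p.1 + p.2) * lam ^ (p.1 + p.2) /
          (p.1.factorial * p.2.factorial * Real.Gamma (μ * (p.1 + p.2 : ℕ) + ϑ)) * w (p.1 + p.2)
        = ∑' s : ℕ, risingFactorial ζ s * (2 * lam) ^ s /
            (s.factorial * Real.Gamma (μ * s + ϑ)) * w s := by
  set f : ℕ × ℕ → ℝ := fun p => risingFactorial ζ (p.1 + p.2) * lam ^ (p.1 + p.2) /
      (p.1.factorial * p.2.factorial * Real.Gamma (μ * (p.1 + p.2 : ℕ) + ϑ)) * w (p.1 + p.2)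
    with hfdef
  have hf0 : ∀ p, 0 ≤ f p := by
    intro p
    have h1 := (rf_pos hζ (p.1 + p.2)).le
    have h2 := (hΓpos (p.1 + p.2)).le
    have h3 := hw (p.1 + p.2)
    positivity
  set e := Finset.HasAntidiagonal.sigmaAntidiagonalEquivProd (A := ℕ) with hedef
  have hrow : ∀ n : ℕ, ∑' (y : (Finset.HasAntidiagonal.antidiagonal n : Finset (ℕ × ℕ))), f y
      = risingFactorial ζ n * (2 * lam) ^ n / (n.factorial * Real.Gamma (μ * n + ϑ)) * w n := by
    intro n
    rw [Finset.tsum_subtype (Finset.HasAntidiagonal.antidiagonal n) f]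
    have hterm : ∀ p ∈ Finset.HasAntidiagonal.antidiagonal n,
        f p = (risingFactorial ζ n * lam ^ n * w n / Real.Gamma (μ * n + ϑ)) *
          ((p.1.factorial : ℝ) * p.2.factorial)⁻¹ := by
      intro p hp
      rw [Finset.HasAntidiagonal.mem_antidiagonal] at hp
      rw [hfdef]
      simp only
      rw [hp]
      ring
    rw [Finset.sum_congr rfl hterm, ← Finset.mul_sum, sum_antidiag_inv_fact]
    have hΓn := (hΓpos n).ne'
    have hfn : ((n.factorial : ℝ)) ≠ 0 := Nat.cast_ne_zero.mpr n.factorial_ne_zero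
    rw [mul_pow]
    field_simp
  have hg0 : ∀ x : (Σ n : ℕ, (Finset.HasAntidiagonal.antidiagonal n : Finset (ℕ × ℕ))), 0 ≤ f (e x) :=
    fun x => hf0 _
  have hgsum : Summable (fun x : (Σ n : ℕ, (Finset.HasAntidiagonal.antidiagonal n : Finset (ℕ × ℕ))) => f (e x)) := by
    apply (summable_sigma_of_nonneg hg0).mpr
    constructor
    · intro n
      exact Summable.of_finite
    · exact hsum.congr fun n => (hrow n).symm
  have hfsum : Summable f := e.summable_iff.mp hgsum
  refine ⟨hfsum, ?_⟩
  calc tsum f = ∑' x : (Σ n : ℕ, (Finset.HasAntidiagonal.antidiagonal n : Finset (ℕ × ℕ))), f (e x) :=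
        (e.tsum_eq f).symm
    _ = ∑' n : ℕ, ∑' (y : (Finset.HasAntidiagonal.antidiagonal n : Finset (ℕ × ℕ))), f (e ⟨n, y⟩) :=
        Summable.tsum_sigma hgsum
    _ = ∑' s : ℕ, risingFactorial ζ s * (2 * lam) ^ s /
          (s.factorial * Real.Gamma (μ * s + ϑ)) * w s := tsum_congr fun n => hrow n

lemma measurable_tsum' {α ι : Type*} [MeasurableSpace α] [Countable ι] {f : ι → α → ℝ}
    (hf : ∀ i, Measurable (f i)) (hsum : ∀ x, Summable fun i => f i x) :
    Measurable fun x => ∑' i, f i x := by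
  refine measurable_of_tendsto_metrizable' (Filter.atTop : Filter (Finset ι))
    (f := fun s => fun x => ∑ i ∈ s, f i x)
    (fun s => Finset.measurable_sum s fun i _ => hf i) ?_
  rw [tendsto_pi_nhds]
  exact fun x => (hsum x).hasSum

lemma series_base {Ω : Type*} [MeasurableSpace Ω] (P : Measure Ω) [IsProbabilityMeasure P]
    {v : Ω → ℝ} (hvm : Measurable v) (hv0 : ∀ ω, 0 ≤ v ω)
    {A : ℕ → ℝ} (hA : ∀ s, 0 < A s)
    (hpt : ∀ ω, Summable fun s => A s * v ω ^ s)
    (hint : Integrable (fun ω => ∑' s, A s * v ω ^ s) P) :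
    (∀ s : ℕ, Integrable (fun ω => v ω ^ s) P) ∧
      Summable (fun s => A s * ∫ ω, v ω ^ s ∂P) := by
  have hmeas : ∀ s : ℕ, Measurable fun ω => A s * v ω ^ s := fun s =>
    (hvm.pow_const s).const_mul _
  have h0 : ∀ s ω, 0 ≤ A s * v ω ^ s := fun s ω =>
    mul_nonneg (hA s).le (pow_nonneg (hv0 ω) s)
  have key : ∑' s : ℕ, ∫⁻ ω, ENNReal.ofReal (A s * v ω ^ s) ∂P ≠ ∞ := by
    rw [← MeasureTheory.lintegral_tsum (fun s => ((hmeas s).ennreal_ofReal).aemeasurable)]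
    have heq : ∀ ω, ∑' s, ENNReal.ofReal (A s * v ω ^ s)
        = ENNReal.ofReal (∑' s, A s * v ω ^ s) := fun ω =>
      (ENNReal.ofReal_tsum_of_nonneg (fun s => h0 s ω) (hpt ω)).symm
    rw [lintegral_congr heq]
    have hfin := hint.hasFiniteIntegral
    rw [MeasureTheory.hasFiniteIntegral_iff_norm] at hfin
    have heq2 : ∀ ω, ENNReal.ofReal (∑' s, A s * v ω ^ s)
        = ENNReal.ofReal ‖∑' s, A s * v ω ^ s‖ := by
      intro ω
      rw [Real.norm_eq_abs, abs_of_nonneg (tsum_nonneg (fun s => h0 s ω))]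
    rw [lintegral_congr heq2]
    exact hfin.ne
  have hIs : ∀ s : ℕ, Integrable (fun ω => A s * v ω ^ s) P := by
    intro s
    constructor
    · exact (hmeas s).aestronglyMeasurable
    · rw [MeasureTheory.hasFiniteIntegral_iff_norm]
      have : ∀ ω, ENNReal.ofReal ‖A s * v ω ^ s‖ = ENNReal.ofReal (A s * v ω ^ s) := by
        intro ω
        rw [Real.norm_eq_abs, abs_of_nonneg (h0 s ω)]
      rw [lintegral_congr this]
      exact (ENNReal.ne_top_of_tsum_ne_top key s).lt_top
  have hvint : ∀ s : ℕ, Integrable (fun ω => v ω ^ s) P := by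
    intro s
    have := (hIs s).const_mul (A s)⁻¹
    refine this.congr (Filter.Eventually.of_forall fun ω => ?_)
    show (A s)⁻¹ * (A s * v ω ^ s) = v ω ^ s
    rw [inv_mul_cancel_left₀ (hA s).ne']
  refine ⟨hvint, ?_⟩
  have hlint : ∀ s : ℕ, ∫⁻ ω, ENNReal.ofReal (A s * v ω ^ s) ∂P
      = ENNReal.ofReal (A s * ∫ ω, v ω ^ s ∂P) := by
    intro s
    rw [← MeasureTheory.ofReal_integral_eq_lintegral_ofReal (hIs s)
      (Filter.Eventually.of_forall fun ω => h0 s ω)]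
    congr 1
    rw [integral_const_mul]
  rw [funext hlint] at key
  have := ENNReal.summable_toReal key
  refine this.congr fun s => ?_
  rw [ENNReal.toReal_ofReal]
  exact mul_nonneg (hA s).le (integral_nonneg fun ω => pow_nonneg (hv0 ω) s)

lemma series_integral {Ω : Type*} [MeasurableSpace Ω] (P : Measure Ω) [IsProbabilityMeasure P]
    {ι : Type*} [Countable ι] {v : Ω → ℝ} (hvm : Measurable v) (hv0 : ∀ ω, 0 ≤ v ω)
    {c : ι → ℝ} {n : ι → ℕ}
    (hI : ∀ s : ℕ, Integrable (fun ω => v ω ^ s) P)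
    (hcsum : Summable (fun i => |c i| * ∫ ω, v ω ^ (n i) ∂P)) :
    ∫ ω, ∑' i, c i * v ω ^ (n i) ∂P = ∑' i, c i * ∫ ω, v ω ^ (n i) ∂P := by
  have hInn : ∀ s : ℕ, 0 ≤ ∫ ω, v ω ^ s ∂P := fun s =>
    integral_nonneg fun ω => pow_nonneg (hv0 ω) s
  have hlint : ∀ i, ∫⁻ ω, ‖c i * v ω ^ (n i)‖₊ ∂P
      = ENNReal.ofReal (|c i| * ∫ ω, v ω ^ (n i) ∂P) := by
    intro i
    have h1 : ∀ ω, ((‖c i * v ω ^ (n i)‖₊ : ℝ≥0∞))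
        = ENNReal.ofReal (|c i| * v ω ^ (n i)) := by
      intro ω
      rw [← enorm_eq_nnnorm, Real.enorm_eq_ofReal_abs]
      congr 1
      rw [abs_mul, abs_of_nonneg (pow_nonneg (hv0 ω) (n i))]
    rw [lintegral_congr h1,
      ← MeasureTheory.ofReal_integral_eq_lintegral_ofReal ((hI (n i)).const_mul _)
        (Filter.Eventually.of_forall fun ω => mul_nonneg (abs_nonneg _) (pow_nonneg (hv0 ω) _))]
    congr 1
    rw [integral_const_mul]
  have hmain : ∫ ω, ∑' i, c i * v ω ^ (n i) ∂P = ∑' i, ∫ ω, c i * v ω ^ (n i) ∂P := by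
    refine MeasureTheory.integral_tsum (f := fun i (ω : Ω) => c i * v ω ^ (n i))
      (fun i => (((hvm.pow_const (n i)).const_mul (c i))).aestronglyMeasurable) ?_
    calc ∑' i, ∫⁻ ω, (‖c i * v ω ^ (n i)‖₊ : ℝ≥0∞) ∂P
        = ∑' i, ENNReal.ofReal (|c i| * ∫ ω, v ω ^ (n i) ∂P) := tsum_congr hlint
      _ = ENNReal.ofReal (∑' i, |c i| * ∫ ω, v ω ^ (n i) ∂P) :=
          (ENNReal.ofReal_tsum_of_nonneg (fun i => mul_nonneg (abs_nonneg _) (hInn _)) hcsum).symm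
      _ ≠ ⊤ := ENNReal.ofReal_ne_top
  rw [hmain]
  exact tsum_congr fun i => integral_const_mul _ _

noncomputable def mlA (μ ϑ ζ lam : ℝ) (s : ℕ) : ℝ :=
  risingFactorial ζ s * (2 * lam) ^ s / (s.factorial * Real.Gamma (μ * s + ϑ))

noncomputable def mlB (μ ϑ ζ lam : ℝ) (s : ℕ) : ℝ :=
  risingFactorial ζ s * (-lam) ^ s / (s.factorial * Real.Gamma (μ * s + ϑ))

noncomputable def arrC (μ ϑ ζ lam : ℝ) (p : ℕ × ℕ) : ℝ :=
  risingFactorial ζ (p.1 + p.2) * lam ^ (p.1 + p.2) /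
    (p.1.factorial * p.2.factorial * Real.Gamma (μ * (p.1 + p.2 : ℕ) + ϑ))

noncomputable def dC (μ ϑ ζ lam : ℝ) (F : ℕ → ℝ) (p : ℕ × ℕ) : ℝ :=
  lam ^ (p.1 + 1) * risingFactorial ζ (p.1 + 1) / (p.1 + 1).factorial * F (p.1 + 1) *
    (risingFactorial (ζ + (p.1 + 1)) p.2 * (-lam) ^ p.2 /
      (p.2.factorial * Real.Gamma (μ * ((p.2 : ℝ) + (p.1 + 1)) + ϑ)))

lemma mlA_pos {μ ϑ ζ lam : ℝ} (hζ : 0 < ζ)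
    (hΓpos : ∀ s : ℕ, 0 < Real.Gamma (μ * s + ϑ)) (hlam : 0 < lam) (s : ℕ) :
    0 < mlA μ ϑ ζ lam s := by
  unfold mlA
  have h1 := rf_pos hζ s
  have h2 := hΓpos s
  positivity

lemma mlB_abs {μ ϑ ζ lam : ℝ} (hζ : 0 < ζ)
    (hΓpos : ∀ s : ℕ, 0 < Real.Gamma (μ * s + ϑ)) (hlam : 0 < lam) (s : ℕ) :
    |mlB μ ϑ ζ lam s| = risingFactorial ζ s * lam ^ s / (s.factorial * Real.Gamma (μ * s + ϑ)) := by
  have h1 := rf_pos hζ s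
  have h2 := hΓpos s
  have he : mlB μ ϑ ζ lam s
      = (-1) ^ s * (risingFactorial ζ s * lam ^ s / (s.factorial * Real.Gamma (μ * s + ϑ))) := by
    unfold mlB
    rw [neg_pow]
    ring
  rw [he, abs_mul, abs_pow, abs_neg, abs_one, one_pow, one_mul, abs_of_nonneg (by positivity)]

lemma mlB_le_mlA {μ ϑ ζ lam : ℝ} (hζ : 0 < ζ)
    (hΓpos : ∀ s : ℕ, 0 < Real.Gamma (μ * s + ϑ)) (hlam : 0 < lam) (s : ℕ) :
    |mlB μ ϑ ζ lam s| ≤ mlA μ ϑ ζ lam s := by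
  rw [mlB_abs hζ hΓpos hlam s]
  unfold mlA
  have h1 := (rf_pos hζ s).le
  have h2 := hΓpos s
  have h3 : lam ^ s ≤ (2 * lam) ^ s := pow_le_pow_left₀ hlam.le (by linarith) s
  have h4 : risingFactorial ζ s * lam ^ s ≤ risingFactorial ζ s * (2 * lam) ^ s :=
    mul_le_mul_of_nonneg_left h3 h1
  have h5 : (0:ℝ) < (s.factorial : ℝ) * Real.Gamma (μ * s + ϑ) := by positivity
  exact (div_le_div_iff_of_pos_right h5).mpr h4

lemma arrC_nonneg {μ ϑ ζ lam : ℝ} (hζ : 0 < ζ)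
    (hΓpos : ∀ s : ℕ, 0 < Real.Gamma (μ * s + ϑ)) (hlam : 0 < lam) (p : ℕ × ℕ) :
    0 ≤ arrC μ ϑ ζ lam p := by
  unfold arrC
  have h1 := (rf_pos hζ (p.1 + p.2)).le
  have h2 := (hΓpos (p.1 + p.2)).le
  positivity

lemma dC_eq {μ ϑ ζ lam : ℝ} (hζ : 0 < ζ) (lamF : ℕ → ℝ) (p : ℕ × ℕ) :
    dC μ ϑ ζ lam lamF p
      = (-1) ^ p.2 * (arrC μ ϑ ζ lam (p.1 + 1, p.2) * lamF (p.1 + 1)) := by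
  unfold dC arrC
  have hcast : μ * ((p.2 : ℝ) + (p.1 + 1)) + ϑ = μ * (((p.1 + 1) + p.2 : ℕ) : ℝ) + ϑ := by
    push_cast; ring
  rw [hcast]
  have hrfadd : risingFactorial ζ ((p.1 + 1) + p.2)
      = risingFactorial ζ (p.1 + 1) * risingFactorial (ζ + ((p.1 : ℝ) + 1)) p.2 := by
    have h := rf_add hζ (p.1 + 1) p.2
    rwa [show (((p.1 + 1 : ℕ)) : ℝ) = (p.1 : ℝ) + 1 by push_cast; ring] at h
  simp only
  rw [hrfadd, neg_pow, pow_add]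
  ring

lemma dC_abs {μ ϑ ζ lam : ℝ} (hζ : 0 < ζ)
    (hΓpos : ∀ s : ℕ, 0 < Real.Gamma (μ * s + ϑ)) (hlam : 0 < lam)
    {lamF : ℕ → ℝ} (hF0 : ∀ m, 0 ≤ lamF m) (p : ℕ × ℕ) :
    |dC μ ϑ ζ lam lamF p| = arrC μ ϑ ζ lam (p.1 + 1, p.2) * lamF (p.1 + 1) := by
  rw [dC_eq hζ lamF p, abs_mul, abs_pow, abs_neg, abs_one, one_pow, one_mul,
    abs_of_nonneg (mul_nonneg (arrC_nonneg hζ hΓpos hlam _) (hF0 _))]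

lemma integrable_tsum_series {Ω ι : Type*} [MeasurableSpace Ω] {P : Measure Ω} [Countable ι]
    {v g : Ω → ℝ} (hvm : Measurable v)
    {c : ι → ℝ} {n : ι → ℕ}
    (hpt : ∀ ω, Summable fun i => |c i * v ω ^ (n i)|)
    (hg : Integrable g P)
    (hbound : ∀ ω, ∑' i, |c i * v ω ^ (n i)| ≤ g ω) :
    Integrable (fun ω => ∑' i, c i * v ω ^ (n i)) P := by
  refine Integrable.mono' hg
    ((measurable_tsum' (fun i => (hvm.pow_const (n i)).const_mul (c i))
      (fun ω => (hpt ω).of_abs)).aestronglyMeasurable)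
    (Filter.Eventually.of_forall fun ω => ?_)
  calc ‖∑' i, c i * v ω ^ (n i)‖ ≤ ∑' i, ‖c i * v ω ^ (n i)‖ :=
        norm_tsum_le_tsum_norm (by simpa only [Real.norm_eq_abs] using hpt ω)
    _ ≤ g ω := by simpa only [Real.norm_eq_abs] using hbound ω

end MCFCP

open MCFCP

/-- Cdf of the multiplicative compound FCP at Lévy times: with
`F_m = ℙ[X₁⋯X_m ≤ y]` and `W(y,u) = 𝟙_{y≥1} Γ(ϑ)E_{μ,ϑ}^{ζ}(−λu^θ) + ∑_{m≥1} P(m,u)F_m`,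
one has `𝔼[W(y,H)] = 𝟙_{y≥1} Γ(ϑ) ∑_k (ζ)_k(−λ)^k/(k!Γ(μk+ϑ)) 𝔼[H^{θk}]
 + Γ(ϑ) ∑_{m≥1} (λ^m(ζ)_m/m!) F_m ∑_l (ζ+m)_l(−λ)^l/(l!Γ(μ(l+m)+ϑ)) 𝔼[H^{θ(l+m)}]`. -/
theorem mcfcp_levy_cdf {Ω : Type*} [MeasurableSpace Ω] (P : Measure Ω)
    [IsProbabilityMeasure P]
    (μ ϑ ζ θ lam : ℝ) (hμ : 0 < μ) (hμ1 : μ ≤ 1) (hζ : 0 < ζ) (hϑ : μ * ζ ≤ ϑ)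
    (hθ : 0 < θ) (hθ1 : θ ≤ 1) (hlam : 0 < lam)
    (X : ℕ → Ω → ℝ) (hXm : ∀ i, Measurable (X i))
    (hXindep : iIndepFun X P)
    (hXid : ∀ i, IdentDistrib (X i) (X 0) P P)
    (y : ℝ)
    (F : ℕ → ℝ) (hF : ∀ m, F m = (P {ω | ∏ i ∈ Finset.range m, X i ω ≤ y}).toReal)
    (H : Ω → ℝ) (hHm : Measurable H) (hH0 : ∀ ω, 0 ≤ H ω)
    (hint : Integrable (fun ω => mittagLeffler μ ϑ ζ (2 * lam * H ω ^ θ)) P)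
    (W : ℝ → ℝ → ℝ)
    (hW : ∀ u, W y u = (if 1 ≤ y then Real.Gamma ϑ * mittagLeffler μ ϑ ζ (-(lam * u ^ θ))
        else 0) + ∑' m : ℕ, fcpP μ ϑ ζ θ lam (m + 1) u * F (m + 1)) :
    (Summable fun k : ℕ =>
      |risingFactorial ζ k * (-lam) ^ k / (k.factorial * Real.Gamma (μ * k + ϑ)) *
        ∫ ω, H ω ^ (θ * (k : ℝ)) ∂P|) ∧
    (Summable fun p : ℕ × ℕ =>
      |lam ^ (p.1 + 1) * risingFactorial ζ (p.1 + 1) / (p.1 + 1).factorial * F (p.1 + 1) *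
        (risingFactorial (ζ + (p.1 + 1)) p.2 * (-lam) ^ p.2 /
          (p.2.factorial * Real.Gamma (μ * ((p.2 : ℝ) + (p.1 + 1)) + ϑ))) *
        ∫ ω, H ω ^ (θ * ((p.2 : ℝ) + (p.1 + 1))) ∂P|) ∧
    ((∫ ω, W y (H ω) ∂P)
      = (if 1 ≤ y then 1 else 0) * Real.Gamma ϑ *
          (∑' k : ℕ, risingFactorial ζ k * (-lam) ^ k /
            (k.factorial * Real.Gamma (μ * k + ϑ)) * ∫ ω, H ω ^ (θ * (k : ℝ)) ∂P)
        + Real.Gamma ϑ * ∑' m : ℕ,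
            lam ^ (m + 1) * risingFactorial ζ (m + 1) / (m + 1).factorial * F (m + 1) *
              ∑' l : ℕ, risingFactorial (ζ + (m + 1)) l * (-lam) ^ l /
                (l.factorial * Real.Gamma (μ * ((l : ℝ) + (m + 1)) + ϑ)) *
                ∫ ω, H ω ^ (θ * ((l : ℝ) + (m + 1))) ∂P) := by
    classical
  have hϑ0 : 0 < ϑ := lt_of_lt_of_le (mul_pos hμ hζ) hϑ
  have hΓϑ : 0 < Real.Gamma ϑ := Real.Gamma_pos_of_pos hϑ0
  have hΓpos : ∀ s : ℕ, 0 < Real.Gamma (μ * s + ϑ) := fun s =>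
    Real.Gamma_pos_of_pos (by positivity)
  have hvm : Measurable (fun ω => H ω ^ θ) :=
    (Real.continuous_rpow_const hθ.le).measurable.comp hHm
  have hv0 : ∀ ω, 0 ≤ H ω ^ θ := fun ω => Real.rpow_nonneg (hH0 ω) θ
  have hF0 : ∀ m, 0 ≤ F m := fun m => by rw [hF m]; exact ENNReal.toReal_nonneg
  have hF1 : ∀ m, F m ≤ 1 := by
    intro m
    rw [hF m]
    calc (P {ω | ∏ i ∈ Finset.range m, X i ω ≤ y}).toReal
        ≤ (1 : ℝ≥0∞).toReal := ENNReal.toReal_mono ENNReal.one_ne_top prob_le_one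
      _ = 1 := ENNReal.toReal_one
  -- pointwise summability of the dominating series
  have hptA : ∀ ω : Ω, Summable fun s => mlA μ ϑ ζ lam s * (H ω ^ θ) ^ s := by
    intro ω
    have h := summable_ML hμ hϑ0 hζ (z := 2 * lam * H ω ^ θ)
      (mul_nonneg (by positivity) (hv0 ω))
    refine h.congr fun s => ?_
    simp only [mlA]
    rw [mul_pow]
    ring
  -- the dominating function is integrable
  have hintA : Integrable (fun ω => ∑' s, mlA μ ϑ ζ lam s * (H ω ^ θ) ^ s) P := by
    refine hint.congr (Filter.Eventually.of_forall fun ω => ?_)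
    unfold mittagLeffler
    refine tsum_congr fun s => ?_
    simp only [mlA]
    rw [mul_pow]
    ring
  obtain ⟨hPint, hSAI⟩ := series_base P hvm hv0
    (fun s => mlA_pos hζ hΓpos hlam s) hptA hintA
  have hInn : ∀ s : ℕ, 0 ≤ ∫ ω, (H ω ^ θ) ^ s ∂P := fun s =>
    integral_nonneg fun ω => pow_nonneg (hv0 ω) s
  -- converting rpow integrals to pow integrals
  have hpow : ∀ (k : ℕ) (ω : Ω), H ω ^ (θ * (k : ℝ)) = (H ω ^ θ) ^ k := fun k ω => by
    rw [Real.rpow_mul (hH0 ω), Real.rpow_natCast]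
  have hIexp : ∀ k : ℕ, (∫ ω, H ω ^ (θ * (k : ℝ)) ∂P) = ∫ ω, (H ω ^ θ) ^ k ∂P := fun k =>
    integral_congr_ae (Filter.Eventually.of_forall fun ω => hpow k ω)
  have harg : ∀ m l : ℕ, θ * ((l : ℝ) + (m + 1)) = θ * ((((m + 1) + l : ℕ)) : ℝ) := by
    intro m l; push_cast; ring
  have hIexp2 : ∀ m l : ℕ, (∫ ω, H ω ^ (θ * ((l : ℝ) + (m + 1))) ∂P)
      = ∫ ω, (H ω ^ θ) ^ ((m + 1) + l) ∂P := fun m l => by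
    rw [harg m l]; exact hIexp _
  -- claim 1
  have hc1 : Summable (fun k : ℕ => |mlB μ ϑ ζ lam k * ∫ ω, (H ω ^ θ) ^ k ∂P|) := by
    refine Summable.of_nonneg_of_le (fun k => abs_nonneg _) (fun k => ?_) hSAI
    rw [abs_mul, abs_of_nonneg (hInn k)]
    exact mul_le_mul_of_nonneg_right (mlB_le_mlA hζ hΓpos hlam k) (hInn k)
  have claim1 : Summable fun k : ℕ =>
      |risingFactorial ζ k * (-lam) ^ k / (k.factorial * Real.Gamma (μ * k + ϑ)) *
        ∫ ω, H ω ^ (θ * (k : ℝ)) ∂P| := by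
    refine hc1.congr fun k => ?_
    rw [hIexp k]
    simp only [mlB]
  -- the array facts
  obtain ⟨harrIsum, harrIeq⟩ := array_summable_tsum (μ := μ) (ϑ := ϑ) hζ hΓpos hlam.le
    (w := fun s => ∫ ω, (H ω ^ θ) ^ s ∂P) hInn (hSAI.congr fun s => by simp only [mlA])
  have harrU : ∀ ω : Ω,
      Summable (fun p : ℕ × ℕ => arrC μ ϑ ζ lam p * ((H ω ^ θ) ^ (p.1 + p.2))) ∧
      ∑' p : ℕ × ℕ, arrC μ ϑ ζ lam p * ((H ω ^ θ) ^ (p.1 + p.2))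
        = ∑' s : ℕ, mlA μ ϑ ζ lam s * (H ω ^ θ) ^ s := by
    intro ω
    obtain ⟨h1, h2⟩ := array_summable_tsum (μ := μ) (ϑ := ϑ) hζ hΓpos hlam.le
      (w := fun s => (H ω ^ θ) ^ s) (fun s => pow_nonneg (hv0 ω) s)
      ((hptA ω).congr fun s => by simp only [mlA])
    refine ⟨h1.congr fun p => by simp only [arrC], ?_⟩
    calc ∑' p : ℕ × ℕ, arrC μ ϑ ζ lam p * ((H ω ^ θ) ^ (p.1 + p.2))
        = ∑' p : ℕ × ℕ, risingFactorial ζ (p.1 + p.2) * lam ^ (p.1 + p.2) /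
            (p.1.factorial * p.2.factorial * Real.Gamma (μ * (p.1 + p.2 : ℕ) + ϑ)) *
            ((H ω ^ θ) ^ (p.1 + p.2)) := tsum_congr fun p => by simp only [arrC]
      _ = ∑' s : ℕ, risingFactorial ζ s * (2 * lam) ^ s /
            (s.factorial * Real.Gamma (μ * s + ϑ)) * ((H ω ^ θ) ^ s) := h2
      _ = ∑' s : ℕ, mlA μ ϑ ζ lam s * (H ω ^ θ) ^ s := tsum_congr fun s => by simp only [mlA]
  -- the shift injection
  have hinj : Function.Injective (fun p : ℕ × ℕ => (p.1 + 1, p.2)) := by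
    intro a b h
    have h1 := congrArg Prod.fst h
    have h2 := congrArg Prod.snd h
    simp only at h1 h2
    exact Prod.ext (by omega) h2
  have hdabs : ∀ p : ℕ × ℕ, |dC μ ϑ ζ lam F p| = arrC μ ϑ ζ lam (p.1 + 1, p.2) * F (p.1 + 1) :=
    dC_abs hζ hΓpos hlam hF0
  have hdle : ∀ p : ℕ × ℕ, |dC μ ϑ ζ lam F p| ≤ arrC μ ϑ ζ lam (p.1 + 1, p.2) := by
    intro p
    rw [hdabs p]
    calc arrC μ ϑ ζ lam (p.1 + 1, p.2) * F (p.1 + 1)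
        ≤ arrC μ ϑ ζ lam (p.1 + 1, p.2) * 1 :=
          mul_le_mul_of_nonneg_left (hF1 _) (arrC_nonneg hζ hΓpos hlam _)
      _ = arrC μ ϑ ζ lam (p.1 + 1, p.2) := mul_one _
  -- double summability with the integrals
  have hdIsum : Summable fun p : ℕ × ℕ =>
      |dC μ ϑ ζ lam F p * ∫ ω, (H ω ^ θ) ^ ((p.1 + 1) + p.2) ∂P| := by
    refine Summable.of_nonneg_of_le (fun p => abs_nonneg _) (fun p => ?_)
      ((harrIsum.comp_injective hinj).congr fun p => rfl)
    rw [abs_mul, abs_of_nonneg (hInn _)]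
    exact mul_le_mul_of_nonneg_right (hdle p) (hInn _)
  have claim2 : Summable fun p : ℕ × ℕ =>
      |lam ^ (p.1 + 1) * risingFactorial ζ (p.1 + 1) / (p.1 + 1).factorial * F (p.1 + 1) *
        (risingFactorial (ζ + (p.1 + 1)) p.2 * (-lam) ^ p.2 /
          (p.2.factorial * Real.Gamma (μ * ((p.2 : ℝ) + (p.1 + 1)) + ϑ))) *
        ∫ ω, H ω ^ (θ * ((p.2 : ℝ) + (p.1 + 1))) ∂P| := by
    refine hdIsum.congr fun p => ?_
    rw [hIexp2 p.1 p.2]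
    simp only [dC]
  -- pointwise double summability
  have hptd_abs : ∀ ω : Ω, Summable fun p : ℕ × ℕ =>
      |dC μ ϑ ζ lam F p * (H ω ^ θ) ^ ((p.1 + 1) + p.2)| := by
    intro ω
    refine Summable.of_nonneg_of_le (fun p => abs_nonneg _) (fun p => ?_)
      (((harrU ω).1.comp_injective hinj).congr fun p => rfl)
    rw [abs_mul, abs_of_nonneg (pow_nonneg (hv0 ω) _)]
    exact mul_le_mul_of_nonneg_right (hdle p) (pow_nonneg (hv0 ω) _)
  -- pointwise identity for the compound sum
  have hT2pt : ∀ ω : Ω, (∑' m : ℕ, fcpP μ ϑ ζ θ lam (m + 1) (H ω) * F (m + 1))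
      = Real.Gamma ϑ *
        ∑' p : ℕ × ℕ, dC μ ϑ ζ lam F p * (H ω ^ θ) ^ ((p.1 + 1) + p.2) := by
    intro ω
    have hterm : ∀ m : ℕ, fcpP μ ϑ ζ θ lam (m + 1) (H ω) * F (m + 1)
        = Real.Gamma ϑ *
          ∑' l : ℕ, dC μ ϑ ζ lam F (m, l) * (H ω ^ θ) ^ ((m + 1) + l) := by
      intro m
      unfold fcpP
      have hArr : ∀ X : ℝ,
          (risingFactorial ζ (m + 1) * Real.Gamma ϑ * (lam * H ω ^ θ) ^ (m + 1) /
            (m + 1).factorial * X) * F (m + 1)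
          = (risingFactorial ζ (m + 1) * Real.Gamma ϑ * (lam * H ω ^ θ) ^ (m + 1) /
            (m + 1).factorial * F (m + 1)) * X := fun X => by ring
      rw [hArr, ← tsum_mul_left, ← tsum_mul_left]
      refine tsum_congr fun l => ?_
      simp only [dC]
      rw [show -(lam * H ω ^ θ) = (-lam) * H ω ^ θ by ring, mul_pow, mul_pow,
        show (((m + 1 + l : ℕ)) : ℝ) = (l : ℝ) + ((m : ℝ) + 1) by push_cast; ring,
        show (((m + 1 : ℕ)) : ℝ) = (m : ℝ) + 1 by push_cast; ring]
      ring
    calc (∑' m : ℕ, fcpP μ ϑ ζ θ lam (m + 1) (H ω) * F (m + 1))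
        = ∑' m : ℕ, Real.Gamma ϑ *
            ∑' l : ℕ, dC μ ϑ ζ lam F (m, l) * (H ω ^ θ) ^ ((m + 1) + l) :=
          tsum_congr hterm
      _ = Real.Gamma ϑ * ∑' m : ℕ,
            ∑' l : ℕ, dC μ ϑ ζ lam F (m, l) * (H ω ^ θ) ^ ((m + 1) + l) := tsum_mul_left
      _ = Real.Gamma ϑ *
            ∑' p : ℕ × ℕ, dC μ ϑ ζ lam F p * (H ω ^ θ) ^ ((p.1 + 1) + p.2) := by
          rw [← Summable.tsum_prod' (hptd_abs ω).of_abs ((hptd_abs ω).of_abs.prod_factor)]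
  -- integrability of both pieces
  have hbound2 : ∀ ω : Ω, (∑' p : ℕ × ℕ, |dC μ ϑ ζ lam F p * (H ω ^ θ) ^ ((p.1 + 1) + p.2)|)
      ≤ ∑' s : ℕ, mlA μ ϑ ζ lam s * (H ω ^ θ) ^ s := by
    intro ω
    calc (∑' p : ℕ × ℕ, |dC μ ϑ ζ lam F p * (H ω ^ θ) ^ ((p.1 + 1) + p.2)|)
        ≤ ∑' p : ℕ × ℕ, arrC μ ϑ ζ lam p * ((H ω ^ θ) ^ (p.1 + p.2)) := by
          refine Summable.tsum_le_tsum_of_inj (fun p : ℕ × ℕ => (p.1 + 1, p.2)) hinj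
            (fun c _ => mul_nonneg (arrC_nonneg hζ hΓpos hlam c) (pow_nonneg (hv0 ω) _))
            (fun p => ?_) (hptd_abs ω) (harrU ω).1
          rw [abs_mul, abs_of_nonneg (pow_nonneg (hv0 ω) _)]
          exact mul_le_mul_of_nonneg_right (hdle p) (pow_nonneg (hv0 ω) _)
      _ = ∑' s : ℕ, mlA μ ϑ ζ lam s * (H ω ^ θ) ^ s := (harrU ω).2
  have hT2int0 : Integrable
      (fun ω => ∑' p : ℕ × ℕ, dC μ ϑ ζ lam F p * (H ω ^ θ) ^ ((p.1 + 1) + p.2)) P :=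
    integrable_tsum_series (n := fun p : ℕ × ℕ => (p.1 + 1) + p.2) hvm hptd_abs hintA hbound2
  have hpt1abs : ∀ ω : Ω, Summable fun k : ℕ => |mlB μ ϑ ζ lam k * (H ω ^ θ) ^ k| := by
    intro ω
    refine Summable.of_nonneg_of_le (fun k => abs_nonneg _) (fun k => ?_) (hptA ω)
    rw [abs_mul, abs_of_nonneg (pow_nonneg (hv0 ω) _)]
    exact mul_le_mul_of_nonneg_right (mlB_le_mlA hζ hΓpos hlam k) (pow_nonneg (hv0 ω) _)
  have hbound1 : ∀ ω : Ω, (∑' k : ℕ, |mlB μ ϑ ζ lam k * (H ω ^ θ) ^ k|)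
      ≤ ∑' s : ℕ, mlA μ ϑ ζ lam s * (H ω ^ θ) ^ s := by
    intro ω
    refine Summable.tsum_le_tsum (fun k => ?_) (hpt1abs ω) (hptA ω)
    rw [abs_mul, abs_of_nonneg (pow_nonneg (hv0 ω) _)]
    exact mul_le_mul_of_nonneg_right (mlB_le_mlA hζ hΓpos hlam k) (pow_nonneg (hv0 ω) _)
  have hT1int0 : Integrable (fun ω => ∑' k : ℕ, mlB μ ϑ ζ lam k * (H ω ^ θ) ^ k) P :=
    integrable_tsum_series (n := fun k : ℕ => k) hvm hpt1abs hintA hbound1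
  -- pointwise identity for the Mittag-Leffler part
  have hMLneg : ∀ ω : Ω, mittagLeffler μ ϑ ζ (-(lam * H ω ^ θ))
      = ∑' k : ℕ, mlB μ ϑ ζ lam k * (H ω ^ θ) ^ k := by
    intro ω
    unfold mittagLeffler
    refine tsum_congr fun k => ?_
    simp only [mlB]
    rw [show -(lam * H ω ^ θ) = (-lam) * H ω ^ θ by ring, mul_pow]
    ring
  -- integral identities
  have hIT1 : (∫ ω, ∑' k : ℕ, mlB μ ϑ ζ lam k * (H ω ^ θ) ^ k ∂P)
      = ∑' k : ℕ, mlB μ ϑ ζ lam k * ∫ ω, (H ω ^ θ) ^ k ∂P := by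
    refine series_integral P (n := fun k : ℕ => k) hvm hv0 hPint ?_
    refine hc1.congr fun k => ?_
    rw [abs_mul, abs_of_nonneg (hInn k)]
  have hIT2 : (∫ ω, ∑' p : ℕ × ℕ, dC μ ϑ ζ lam F p * (H ω ^ θ) ^ ((p.1 + 1) + p.2) ∂P)
      = ∑' p : ℕ × ℕ, dC μ ϑ ζ lam F p * ∫ ω, (H ω ^ θ) ^ ((p.1 + 1) + p.2) ∂P := by
    refine series_integral P (n := fun p : ℕ × ℕ => (p.1 + 1) + p.2) hvm hv0 hPint ?_
    refine hdIsum.congr fun p => ?_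
    rw [abs_mul, abs_of_nonneg (hInn _)]
  refine ⟨claim1, claim2, ?_⟩
  have hstep1 : (∫ ω, W y (H ω) ∂P)
      = ∫ ω, ((if 1 ≤ y then (1:ℝ) else 0) *
            (Real.Gamma ϑ * ∑' k : ℕ, mlB μ ϑ ζ lam k * (H ω ^ θ) ^ k)
          + Real.Gamma ϑ *
            ∑' p : ℕ × ℕ, dC μ ϑ ζ lam F p * (H ω ^ θ) ^ ((p.1 + 1) + p.2)) ∂P := by
    refine integral_congr_ae (Filter.Eventually.of_forall fun ω => ?_)
    show W y (H ω) = _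
    rw [hW (H ω), hT2pt ω]
    congr 1
    by_cases hy : 1 ≤ y
    · rw [if_pos hy, if_pos hy, one_mul, hMLneg ω]
    · rw [if_neg hy, if_neg hy, zero_mul]
  rw [hstep1, integral_add
      ((hT1int0.const_mul (Real.Gamma ϑ)).const_mul (if 1 ≤ y then (1:ℝ) else 0))
      (hT2int0.const_mul (Real.Gamma ϑ)),
    integral_const_mul, integral_const_mul, integral_const_mul, hIT1, hIT2]
  congr 1
  · rw [← mul_assoc]
    congr 1
    refine tsum_congr fun k => ?_
    rw [hIexp k]
    simp only [mlB]
  · congr 1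
    rw [Summable.tsum_prod' hdIsum.of_abs hdIsum.of_abs.prod_factor]
    refine tsum_congr fun m => ?_
    rw [← tsum_mul_left]
    refine tsum_congr fun l => ?_
    rw [hIexp2 m l]
    simp only [dC]
    ring
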